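/- Let F be a free group on x_1, x_2 and let N be the normal closure in F of {x_1², x_2²}. Then N[F,F] = F²[F,F], and the quotient N[F,F]/N[[F,F],F] is a cyclic group of order at most 2 generated by the image of the commutator [x_1, x_2]; in particular [x_1, x_2]² ∈ N[[F,F],F]. -/

import Mathlib

open scoped commutatorElement

/-- The free group on two generators `x₁, x₂`. -/
abbrev F₂free : Type := FreeGroup (Fin 2)

/-- `x₁`. -/
def x₁ : F₂free := FreeGroup.of 0
/-- `x₂`. -/
def x₂ : F₂free := FreeGroup.of 1

/-- `N`, the normal closure of `{x₁², x₂²}` in `F`. -/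
def Nsub : Subgroup F₂free := Subgroup.normalClosure {x₁ ^ 2, x₂ ^ 2}

/-- `[F, F]`, the commutator subgroup. -/
def Csub : Subgroup F₂free := ⁅(⊤ : Subgroup F₂free), (⊤ : Subgroup F₂free)⁆

/-- `[[F, F], F]`. -/
def C₂sub : Subgroup F₂free := ⁅Csub, (⊤ : Subgroup F₂free)⁆

instance : Nsub.Normal := Subgroup.normalClosure_normal

instance : Csub.Normal := Subgroup.commutator_normal ⊤ ⊤

instance : C₂sub.Normal := Subgroup.commutator_normal Csub ⊤

instance : (Nsub ⊔ C₂sub).Normal := Subgroup.sup_normal _ _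

/-- Any subgroup containing the commutator subgroup is normal. -/
lemma normal_of_csub_le {H : Subgroup F₂free} (h : Csub ≤ H) : H.Normal := by
  constructor
  intro n hn g
  have h1 : g * n * g⁻¹ = ⁅g, n⁆ * n := by
    simp only [commutatorElement_def]; group
  rw [h1]
  exact H.mul_mem (h (Subgroup.commutator_mem_commutator (Subgroup.mem_top g)
    (Subgroup.mem_top n))) hn

/-- Every element of a quotient of `F₂free` lies in the closure of the images of
the generators. -/
lemma F2free_mem_closure_image (H : Subgroup F₂free) [H.Normal] (q : F₂free ⧸ H) :
    q ∈ Subgroup.closure ((QuotientGroup.mk' H) '' Set.range FreeGroup.of) := by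
  have h : Subgroup.closure ((QuotientGroup.mk' H) '' Set.range FreeGroup.of) = ⊤ := by
    rw [← MonoidHom.map_closure, FreeGroup.closure_range_of]
    exact Subgroup.map_top_of_surjective _ (QuotientGroup.mk'_surjective H)
  rw [h]; trivial

lemma key_sq : ⁅x₁, x₂⁆ ^ 2 ∈ Nsub ⊔ C₂sub := by
  have hx : x₁ ^ 2 ∈ Nsub := Subgroup.subset_normalClosure (by simp)
  have hconj : x₂ * (x₁ ^ 2)⁻¹ * x₂⁻¹ ∈ Nsub :=
    Subgroup.Normal.conj_mem inferInstance _ (Nsub.inv_mem hx) x₂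
  have h1 : ⁅x₁ ^ 2, x₂⁆ ∈ Nsub := by
    have heq : ⁅x₁ ^ 2, x₂⁆ = x₁ ^ 2 * (x₂ * (x₁ ^ 2)⁻¹ * x₂⁻¹) := by
      simp only [commutatorElement_def]; group
    rw [heq]; exact Nsub.mul_mem hx hconj
  have h2 : ⁅⁅x₁, x₂⁆, x₁⁆ ∈ C₂sub :=
    Subgroup.commutator_mem_commutator
      (Subgroup.commutator_mem_commutator (Subgroup.mem_top _) (Subgroup.mem_top _))
      (Subgroup.mem_top _)
  have heq : ⁅x₁, x₂⁆ ^ 2 = ⁅⁅x₁, x₂⁆, x₁⁆ * ⁅x₁ ^ 2, x₂⁆ := by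
    simp only [commutatorElement_def, pow_two]; group
  rw [heq]
  exact Subgroup.mul_mem _ (Subgroup.mem_sup_right h2) (Subgroup.mem_sup_left h1)

/-- for the free group `F` on `x₁, x₂` and `N` the normal closure of
`{x₁², x₂²}`, one has `N[F,F] = F²[F,F]`, and `N[F,F]/N[[F,F],F]` is cyclic of order at
most 2, generated by the image of `[x₁, x₂]`; in particular `[x₁,x₂]² ∈ N[[F,F],F]`. -/
theorem redei_uniqueness_group_core :
    (Nsub ⊔ Csub
      = Subgroup.closure (Set.range fun g : F₂free => g ^ 2) ⊔ Csub) ∧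
    ⁅x₁, x₂⁆ ∈ Nsub ⊔ Csub ∧
    (∀ g ∈ Nsub ⊔ Csub, g ∈ Nsub ⊔ C₂sub ∨ ⁅x₁, x₂⁆⁻¹ * g ∈ Nsub ⊔ C₂sub) ∧
    ⁅x₁, x₂⁆ ^ 2 ∈ Nsub ⊔ C₂sub := by
  haveI hNC : (Nsub ⊔ Csub).Normal := normal_of_csub_le le_sup_right
  refine ⟨?_, ?_, ?_, key_sq⟩
  · -- N ⊔ C = F² ⊔ C
    haveI hSC : (Subgroup.closure (Set.range fun g : F₂free => g ^ 2) ⊔ Csub).Normal :=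
      normal_of_csub_le le_sup_right
    apply le_antisymm
    · refine sup_le ?_ le_sup_right
      apply Subgroup.normalClosure_le_normal
      rintro s hs
      rcases hs with rfl | rfl <;>
        exact Subgroup.mem_sup_left (Subgroup.subset_closure ⟨_, rfl⟩)
    · refine sup_le ((Subgroup.closure_le _).mpr ?_) le_sup_right
      rintro s ⟨g, rfl⟩
      show g ^ 2 ∈ Nsub ⊔ Csub
      set π := QuotientGroup.mk' (Nsub ⊔ Csub) with hπ
      -- the quotient is commutative
      have hcomm : ∀ a b : F₂free ⧸ (Nsub ⊔ Csub), a * b = b * a := by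
        intro a b
        have h2 : Subgroup.map π Csub ≤ ⊥ := by
          rintro x ⟨y, hy, rfl⟩
          simp only [Subgroup.mem_bot]
          exact (QuotientGroup.eq_one_iff y).mpr (Subgroup.mem_sup_right hy)
        obtain ⟨a', rfl⟩ := QuotientGroup.mk'_surjective (Nsub ⊔ Csub) a
        obtain ⟨b', rfl⟩ := QuotientGroup.mk'_surjective (Nsub ⊔ Csub) b
        have h1 : ⁅π a', π b'⁆ ∈ (⊥ : Subgroup (F₂free ⧸ (Nsub ⊔ Csub))) :=
          h2 ⟨⁅a', b'⁆, Subgroup.commutator_mem_commutator (Subgroup.mem_top a')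
            (Subgroup.mem_top b'), map_commutatorElement π a' b'⟩
        exact commutatorElement_eq_one_iff_mul_comm.mp (Subgroup.mem_bot.mp h1)
      suffices hq : (π g) ^ 2 = 1 by
        rw [← map_pow] at hq
        exact (QuotientGroup.eq_one_iff _).mp hq
      have hmem := F2free_mem_closure_image (Nsub ⊔ Csub) (π g)
      refine Subgroup.closure_induction (p := fun x _ => x ^ 2 = 1) ?_ ?_ ?_ ?_ hmem
      · rintro x ⟨u, ⟨i, rfl⟩, rfl⟩
        have hu : (FreeGroup.of i : F₂free) ^ 2 ∈ Nsub ⊔ Csub := by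
          apply Subgroup.mem_sup_left
          apply Subgroup.subset_normalClosure
          fin_cases i
          · exact Or.inl rfl
          · exact Or.inr rfl
        rw [← map_pow]
        exact (QuotientGroup.eq_one_iff _).mpr hu
      · exact one_pow 2
      · intro x y hx hy hx2 hy2
        rw [Commute.mul_pow (hcomm x y), hx2, hy2, one_mul]
      · intro x hx hx2
        rw [inv_pow, hx2, inv_one]
  · exact Subgroup.mem_sup_right
      (Subgroup.commutator_mem_commutator (Subgroup.mem_top _) (Subgroup.mem_top _))
  · -- every element of N ⊔ C is, mod N ⊔ C₂, either 1 or [x₁,x₂]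
    intro g hg
    set π := QuotientGroup.mk' (Nsub ⊔ C₂sub) with hπ
    set t := π ⁅x₁, x₂⁆ with ht
    -- centrality of commutators in the quotient
    have hcent : ∀ a b c : F₂free ⧸ (Nsub ⊔ C₂sub), Commute ⁅a, b⁆ c := by
      intro a b c
      have h2 : Subgroup.map π C₂sub ≤ ⊥ := by
        rintro x ⟨y, hy, rfl⟩
        simp only [Subgroup.mem_bot]
        exact (QuotientGroup.eq_one_iff y).mpr (Subgroup.mem_sup_right hy)
      obtain ⟨a', rfl⟩ := QuotientGroup.mk'_surjective (Nsub ⊔ C₂sub) a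
      obtain ⟨b', rfl⟩ := QuotientGroup.mk'_surjective (Nsub ⊔ C₂sub) b
      obtain ⟨c', rfl⟩ := QuotientGroup.mk'_surjective (Nsub ⊔ C₂sub) c
      have hmem : ⁅⁅a', b'⁆, c'⁆ ∈ C₂sub :=
        Subgroup.commutator_mem_commutator
          (Subgroup.commutator_mem_commutator (Subgroup.mem_top a') (Subgroup.mem_top b'))
          (Subgroup.mem_top c')
      have h1 : ⁅⁅π a', π b'⁆, π c'⁆ ∈ (⊥ : Subgroup (F₂free ⧸ (Nsub ⊔ C₂sub))) :=
        h2 ⟨⁅⁅a', b'⁆, c'⁆, hmem, by rw [map_commutatorElement, map_commutatorElement]⟩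
      exact commutatorElement_eq_one_iff_commute.mp (Subgroup.mem_bot.mp h1)
    -- bilinearity of commutators in the quotient
    have hconj : ∀ a b c : F₂free ⧸ (Nsub ⊔ C₂sub), c * ⁅a, b⁆ * c⁻¹ = ⁅a, b⁆ := by
      intro a b c
      rw [← (hcent a b c).eq]
      group
    have hmul_right : ∀ a b c : F₂free ⧸ (Nsub ⊔ C₂sub),
        ⁅a, b * c⁆ = ⁅a, b⁆ * ⁅a, c⁆ := by
      intro a b c
      have h1 : ⁅a, b * c⁆ = ⁅a, b⁆ * (b * ⁅a, c⁆ * b⁻¹) := by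
        simp only [commutatorElement_def]; group
      rw [h1, hconj]
    have hmul_left : ∀ a b c : F₂free ⧸ (Nsub ⊔ C₂sub),
        ⁅a * b, c⁆ = ⁅a, c⁆ * ⁅b, c⁆ := by
      intro a b c
      have h1 : ⁅a * b, c⁆ = (a * ⁅b, c⁆ * a⁻¹) * ⁅a, c⁆ := by
        simp only [commutatorElement_def]; group
      rw [h1, hconj, (hcent b c ⁅a, c⁆).eq]
    have hinv_right : ∀ a b : F₂free ⧸ (Nsub ⊔ C₂sub), ⁅a, b⁻¹⁆ = ⁅a, b⁆⁻¹ := by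
      intro a b
      have h1 := hmul_right a b b⁻¹
      rw [mul_inv_cancel, commutatorElement_one_right] at h1
      exact (inv_eq_of_mul_eq_one_right h1.symm).symm
    have hinv_left : ∀ a b : F₂free ⧸ (Nsub ⊔ C₂sub), ⁅a⁻¹, b⁆ = ⁅a, b⁆⁻¹ := by
      intro a b
      have h1 := hmul_left a a⁻¹ b
      rw [mul_inv_cancel, commutatorElement_one_left] at h1
      exact (inv_eq_of_mul_eq_one_right h1.symm).symm
    -- all commutators in the quotient are powers of t
    have hcommZ : ∀ a b : F₂free ⧸ (Nsub ⊔ C₂sub), ⁅a, b⁆ ∈ Subgroup.zpowers t := by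
      intro a b
      have ha := F2free_mem_closure_image (Nsub ⊔ C₂sub) a
      have hb := F2free_mem_closure_image (Nsub ⊔ C₂sub) b
      induction ha, hb using Subgroup.closure_induction₂ with
      | mem x y hx hy =>
        obtain ⟨u, ⟨i, rfl⟩, rfl⟩ := hx
        obtain ⟨v, ⟨j, rfl⟩, rfl⟩ := hy
        fin_cases i <;> fin_cases j
        · rw [commutatorElement_self]; exact Subgroup.one_mem _
        · rw [← map_commutatorElement]
          exact Subgroup.mem_zpowers t
        · rw [← commutatorElement_inv, ← map_commutatorElement]
          exact Subgroup.inv_mem _ (Subgroup.mem_zpowers t)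
        · rw [commutatorElement_self]; exact Subgroup.one_mem _
      | one_left x hx => rw [commutatorElement_one_left]; exact Subgroup.one_mem _
      | one_right x hx => rw [commutatorElement_one_right]; exact Subgroup.one_mem _
      | mul_left x y z hx hy hz h1 h2 => rw [hmul_left]; exact Subgroup.mul_mem _ h1 h2
      | mul_right y z x hy hz hx h1 h2 => rw [hmul_right]; exact Subgroup.mul_mem _ h1 h2
      | inv_left x y hx hy h1 => rw [hinv_left]; exact Subgroup.inv_mem _ h1
      | inv_right x y hx hy h1 => rw [hinv_right]; exact Subgroup.inv_mem _ h1
    -- π g ∈ zpowers t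
    have hπg : π g ∈ Subgroup.zpowers t := by
      have hgmem : g ∈ (↑(Nsub ⊔ Csub) : Set F₂free) := hg
      rw [Subgroup.normal_mul] at hgmem
      obtain ⟨n, hn, c, hc, rfl⟩ := hgmem
      have hπn : π n = 1 := (QuotientGroup.eq_one_iff n).mpr (Subgroup.mem_sup_left hn)
      have hπc : π c ∈ Subgroup.zpowers t := by
        have hle : Csub ≤ Subgroup.comap π (Subgroup.zpowers t) := by
          refine Subgroup.commutator_le.mpr fun a _ b _ => ?_
          simp only [Subgroup.mem_comap, map_commutatorElement]
          exact hcommZ (π a) (π b)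
        exact hle hc
      rw [map_mul, hπn, one_mul]
      exact hπc
    -- t² = 1
    have ht2 : t ^ 2 = 1 := by
      rw [ht, ← map_pow]
      exact (QuotientGroup.eq_one_iff _).mpr key_sq
    have ht2z : t ^ (2 : ℤ) = 1 := by
      rw [show (2 : ℤ) = ((2 : ℕ) : ℤ) from rfl, zpow_natCast]; exact ht2
    obtain ⟨k, hk⟩ := hπg
    have hk' : t ^ k = π g := hk
    rcases Int.even_or_odd k with ⟨m, hm⟩ | ⟨m, hm⟩
    · left
      have hπg1 : π g = 1 := by
        rw [← hk', hm, show m + m = 2 * m by ring, zpow_mul, ht2z, one_zpow]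
      exact (QuotientGroup.eq_one_iff g).mp hπg1
    · right
      have : π g = t := by
        rw [← hk', hm, zpow_add, zpow_mul, ht2z, one_zpow, one_mul, zpow_one]
      have h1 : π (⁅x₁, x₂⁆⁻¹ * g) = 1 := by
        rw [map_mul, map_inv, this, ← ht, inv_mul_cancel]
      exact (QuotientGroup.eq_one_iff _).mp h1
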